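/- Every finitely generated group that is 1-equationally Artinian is equationally Artinian (in the Diophantine sense, with coefficients from the group itself). -/
import Mathlib


/-- The coefficient-free radical `Rad₁(E)` of a subset `E ⊆ Hⁿ`. -/
def Rad1 (H : Type*) [Group H] {n : ℕ} (E : Set (Fin n → H)) : Set (FreeGroup (Fin n)) :=
  {w | ∀ e ∈ E, FreeGroup.lift e w = 1}

/-- The Diophantine radical `Rad_H(E)` of a subset `E ⊆ Hⁿ` (coefficients from `H` itself). -/
def RadH (H : Type*) [Group H] {n : ℕ} (E : Set (Fin n → H)) :
    Set (Monoid.Coprod H (FreeGroup (Fin n))) :=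
  {w | ∀ e ∈ E, Monoid.Coprod.lift (MonoidHom.id H) (FreeGroup.lift e) w = 1}

open Monoid

section Aux

variable {H : Type*} [Group H] {m n : ℕ} (g : Fin m → H)

/-- The map sending first-block generators to coefficients, second block to variables. -/
noncomputable def piHom (g : Fin m → H) (n : ℕ) :
    FreeGroup (Fin (m + n)) →* Coprod H (FreeGroup (Fin n)) :=
  FreeGroup.lift (Fin.append (fun j => Coprod.inl (g j)) (fun j => Coprod.inr (FreeGroup.of j)))

lemma piHom_comp (e : Fin n → H) :
    (Coprod.lift (MonoidHom.id H) (FreeGroup.lift e)).comp (piHom g n)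
      = FreeGroup.lift (Fin.append g e) := by
  ext i
  refine Fin.addCases (fun i => ?_) (fun i => ?_) i <;>
    simp [piHom, Fin.append_left, Fin.append_right]

lemma piHom_surjective (hg : Subgroup.closure (Set.range g) = ⊤) :
    Function.Surjective (piHom g n) := by
  intro w
  have : w ∈ (piHom g n).range := by
    induction w using Coprod.induction_on with
    | inl a =>
      have : ∀ a : H, Coprod.inl a ∈ (piHom g n).range := by
        intro a
        have ha : a ∈ Subgroup.closure (Set.range g) := hg ▸ Subgroup.mem_top a
        induction ha using Subgroup.closure_induction with
        | mem x hx =>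
          obtain ⟨i, rfl⟩ := hx
          exact ⟨FreeGroup.of (Fin.castAdd n i), by simp [piHom, Fin.append_left]⟩
        | one => exact ⟨1, by simp⟩
        | mul x y _ _ hx hy =>
          obtain ⟨u, hu⟩ := hx; obtain ⟨v, hv⟩ := hy
          exact ⟨u * v, by simp [hu, hv]⟩
        | inv x _ hx =>
          obtain ⟨u, hu⟩ := hx
          exact ⟨u⁻¹, by simp [hu]⟩
      exact this a
    | inr b =>
      refine ⟨FreeGroup.lift (fun j => FreeGroup.of (Fin.natAdd m j)) b, ?_⟩
      have : (piHom g n).comp (FreeGroup.lift (fun j => FreeGroup.of (Fin.natAdd m j)))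
          = (Coprod.inr : FreeGroup (Fin n) →* _) := by
        ext j
        simp [piHom, Fin.append_right]
      exact DFunLike.congr_fun this b
    | mul x y hx hy => exact mul_mem hx hy
  exact this

end Aux

/-- A finitely generated group which is 1-equationally Artinian is equationally Artinian
in the Diophantine sense. -/
theorem fg_oneEqArtinian_to_eqArtinian {H : Type*} [Group H] (hH : Group.FG H)
    (h1 : ∀ (n : ℕ) (E : Set (Fin n → H)), ∃ E₀ ⊆ E, E₀.Finite ∧ Rad1 H E₀ = Rad1 H E) :
    ∀ (n : ℕ) (E : Set (Fin n → H)), ∃ E₀ ⊆ E, E₀.Finite ∧ RadH H E₀ = RadH H E := by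
  obtain ⟨m, S, hcard, hS⟩ := Group.fg_iff'.mp hH
  set g : Fin m → H := fun i => (S.equivFin.symm (Fin.cast hcard.symm i) : H) with hg
  have hrange : Set.range g = ↑S := by
    ext x
    constructor
    · rintro ⟨i, rfl⟩; exact (S.equivFin.symm (Fin.cast hcard.symm i)).2
    · intro hx
      exact ⟨Fin.cast hcard (S.equivFin ⟨x, hx⟩), by simp [hg]⟩
  have hgtop : Subgroup.closure (Set.range g) = ⊤ := by rw [hrange]; exact hS
  intro n E
  have happ_inj : Function.Injective (fun e : Fin n → H => Fin.append g e) := by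
    intro e₁ e₂ h
    funext j
    have := congrFun h (Fin.natAdd m j)
    simpa [Fin.append_right] using this
  obtain ⟨E₀', hsub', hfin', hrad'⟩ := h1 (m + n) ((fun e => Fin.append g e) '' E)
  refine ⟨E ∩ (fun e => Fin.append g e) ⁻¹' E₀', Set.inter_subset_left, ?_, ?_⟩
  · exact Set.Finite.subset (hfin'.preimage happ_inj.injOn) Set.inter_subset_right
  · apply Set.Subset.antisymm
    swap
    · intro w hw e he
      exact hw e he.1
    intro w hw e he
    obtain ⟨w', rfl⟩ := piHom_surjective g hgtop w
    have hw' : w' ∈ Rad1 H E₀' := by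
      intro f hf
      obtain ⟨e₀, he₀, rfl⟩ := hsub' hf
      have := DFunLike.congr_fun (piHom_comp g e₀) w'
      rw [← this]
      exact hw e₀ ⟨he₀, hf⟩
    rw [hrad'] at hw'
    have := hw' (Fin.append g e) ⟨e, he, rfl⟩
    rw [← DFunLike.congr_fun (piHom_comp g e) w'] at this
    exact this
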